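/- Let p be a prime with p ≡ 1 (mod 3), and let A₁, A₂, A₃ be nonzero integers with p ∤ A₁, p ∥ A₂ (p ∣ A₂ and p² ∤ A₂), p ∥ A₃, and with A₂/A₃ not a cube in ℚ_p. Let a ∈ ℚ_p satisfy a² = A₁. Then there are no w, x₁, x₂, x₃ in the ring ℤ_p of p-adic integers such that p does not divide all three of x₁, x₂, x₃, w² = A₁x₁⁶ + A₂x₂⁶ + A₃x₃⁶, w² ≠ A₁x₁⁶, and v_p(w − a·x₁³) ≡ v_p(w + a·x₁³) (mod 3). -/

import Mathlib

namespace Stmt16Aux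

open Polynomial

variable {p : ℕ} [hp : Fact p.Prime]

lemma hp1R : (1 : ℝ) < p := by exact_mod_cast hp.out.one_lt

lemma val_pow (x : ℚ_[p]) (hx : x ≠ 0) (n : ℕ) : (x ^ n).valuation = n * x.valuation := by
  induction n with
  | zero => simp
  | succ n ih =>
    rw [pow_succ, Padic.valuation_mul (pow_ne_zero n hx) hx, ih]
    push_cast; ring

lemma val_intCast_eq_zero {n : ℤ} (h : ¬ (p : ℤ) ∣ n) : ((n : ℚ_[p])).valuation = 0 := by
  rw [Padic.valuation_intCast, padicValInt.eq_zero_of_not_dvd h, Int.ofNat_zero]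

lemma val_neg (x : ℚ_[p]) : (-x).valuation = x.valuation := by
  rcases eq_or_ne x 0 with rfl | hx
  · simp
  · have h1 : (-1 : ℚ_[p]) = ((-1 : ℤ) : ℚ_[p]) := by norm_num
    rw [← neg_one_mul, Padic.valuation_mul (by norm_num) hx, h1,
      Padic.valuation_intCast]
    simp [padicValInt]

lemma val_add_of_lt {x y : ℚ_[p]} (hx : x ≠ 0) (hy : y ≠ 0)
    (h : x.valuation < y.valuation) : (x + y).valuation = x.valuation := by
  have hxy : x + y ≠ 0 := by
    intro h0
    have hyx : y = -x := by linear_combination h0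
    rw [hyx, val_neg] at h
    exact lt_irrefl _ h
  have hnx : ‖x‖ = (p : ℝ) ^ (-x.valuation) := Padic.norm_eq_zpow_neg_valuation hx
  have hny : ‖y‖ = (p : ℝ) ^ (-y.valuation) := Padic.norm_eq_zpow_neg_valuation hy
  have hlt : ‖y‖ < ‖x‖ := by
    rw [hnx, hny]
    exact (zpow_lt_zpow_iff_right₀ hp1R).mpr (by omega)
  have hmax : ‖x + y‖ = ‖x‖ := by
    rw [Padic.add_eq_max_of_ne hlt.ne']
    exact max_eq_left hlt.le
  have h2 : (p : ℝ) ^ (-(x + y).valuation) = (p : ℝ) ^ (-x.valuation) := by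
    rw [← Padic.norm_eq_zpow_neg_valuation hxy, hmax, hnx]
  have h3 := zpow_right_injective₀ (lt_trans zero_lt_one hp1R) (ne_of_gt hp1R) h2
  omega

lemma pdvd_iff_val {x : ℤ_[p]} (hx : x ≠ 0) : (p : ℤ_[p]) ∣ x ↔ 1 ≤ x.valuation := by
  rw [← PadicInt.norm_lt_one_iff_dvd, PadicInt.norm_eq_zpow_neg_valuation hx]
  constructor
  · intro h
    by_contra hc
    push_neg at hc
    have h0 : x.valuation = 0 := le_antisymm (by omega) (Nat.zero_le _)
    rw [h0] at h
    simp at h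
  · intro h
    calc (p : ℝ) ^ (-(x.valuation : ℤ)) < (p : ℝ) ^ (0 : ℤ) :=
        (zpow_lt_zpow_iff_right₀ hp1R).mpr (by omega)
      _ = 1 := zpow_zero _

lemma norm_int_eq_one {n : ℤ} (h : ¬ (p : ℤ) ∣ n) : ‖((n : ℤ) : ℤ_[p])‖ = 1 :=
  le_antisymm (PadicInt.norm_le_one _)
    (le_of_not_gt fun hlt => h ((PadicInt.norm_int_lt_one_iff_dvd n).mp hlt))

lemma valZ_mul {x y : ℤ_[p]} (hx : x ≠ 0) (hy : y ≠ 0) :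
    (x * y).valuation = x.valuation + y.valuation := by
  exact PadicInt.valuation_mul hx hy

lemma valZ_pow (x : ℤ_[p]) (hx : x ≠ 0) (n : ℕ) : (x ^ n).valuation = n * x.valuation := by
  exact PadicInt.valuation_pow x n

lemma valZ_neg (x : ℤ_[p]) : (-x).valuation = x.valuation := by
  have h := val_neg (x : ℚ_[p])
  rw [← PadicInt.coe_neg, PadicInt.valuation_coe, PadicInt.valuation_coe] at h
  exact_mod_cast h

lemma valZ_intCast {n : ℤ} (h : ¬ (p : ℤ) ∣ n) : ((n : ℤ_[p])).valuation = 0 := by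
  have hc : ((n : ℤ_[p]) : ℚ_[p]) = (n : ℚ_[p]) := by push_cast; rfl
  have h' := val_intCast_eq_zero (p := p) h
  rw [← hc, PadicInt.valuation_coe] at h'
  exact_mod_cast h'

lemma valZ_add_min {x y : ℤ_[p]} (h : x + y ≠ 0) :
    min x.valuation y.valuation ≤ (x + y).valuation := by
  exact PadicInt.le_valuation_add h

lemma valZ_add_of_lt {x y : ℤ_[p]} (hx : x ≠ 0) (hy : y ≠ 0)
    (h : x.valuation < y.valuation) : (x + y).valuation = x.valuation := by
  have h' := val_add_of_lt (PadicInt.coe_ne_zero.mpr hx) (PadicInt.coe_ne_zero.mpr hy)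
    (by rw [PadicInt.valuation_coe, PadicInt.valuation_coe]; exact_mod_cast h)
  rw [← PadicInt.coe_add, PadicInt.valuation_coe, PadicInt.valuation_coe] at h'
  exact_mod_cast h'

lemma cube_of_close_one (hp3 : p % 3 = 1) {u : ℤ_[p]} (h : ‖u - 1‖ < 1) :
    ∃ z : ℤ_[p], z ^ 3 = u := by
  have h3d : ¬ (p : ℤ) ∣ 3 := by
    intro hd
    have hd' : p ∣ 3 := by exact_mod_cast hd
    have := (Nat.prime_dvd_prime_iff_eq hp.out (by norm_num)).mp hd'
    omega
  have h3 : ‖((3 : ℤ) : ℤ_[p])‖ = 1 := norm_int_eq_one h3d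
  have h3' : ‖(3 : ℤ_[p])‖ = 1 := by exact_mod_cast h3
  set F : Polynomial ℤ_[p] := X ^ 3 - C u with hF
  have heval : F.eval 1 = 1 - u := by simp [hF]
  have hderiv : F.derivative.eval 1 = 3 := by simp [hF]; norm_num
  have hnorm : ‖F.eval 1‖ < ‖F.derivative.eval 1‖ ^ 2 := by
    rw [heval, hderiv, h3', one_pow, norm_sub_rev]
    exact h
  obtain ⟨z, hz, -⟩ := hensels_lemma hnorm
  refine ⟨z, ?_⟩
  have hz' : z ^ 3 - u = 0 := by simpa [hF] using hz
  linear_combination hz'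

lemma ratio_cube (hp3 : p % 3 = 1) {B₂ B₃ : ℤ} (h2 : ¬ (p : ℤ) ∣ B₂) (h3 : ¬ (p : ℤ) ∣ B₃)
    {u₂ u₃ : ℤ_[p]} (hu₂ : ‖u₂‖ = 1) (hu₃ : ‖u₃‖ = 1)
    (hdvd : (p : ℤ_[p]) ∣ ((B₂ : ℤ_[p]) * u₂ ^ 6 + (B₃ : ℤ_[p]) * u₃ ^ 6)) :
    ∃ y : ℚ_[p], y ^ 3 = (B₂ : ℚ_[p]) / (B₃ : ℚ_[p]) := by
  obtain ⟨e, he⟩ := hdvd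
  have hB3u : IsUnit ((B₃ : ℤ_[p]) * u₃ ^ 6) := PadicInt.isUnit_iff.mpr (by
    rw [norm_mul, norm_pow, norm_int_eq_one h3, hu₃]; norm_num)
  obtain ⟨v, hv⟩ := hB3u
  have ht : ((B₃ : ℤ_[p]) * u₃ ^ 6) * (↑v⁻¹ : ℤ_[p]) = 1 := by
    rw [← hv]; exact_mod_cast v.mul_inv
  set t : ℤ_[p] := (↑v⁻¹ : ℤ_[p]) with htdef
  set U : ℤ_[p] := 1 - (p : ℤ_[p]) * e * t with hU
  have hUclose : ‖U - 1‖ < 1 := by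
    have hU1 : U - 1 = -((p : ℤ_[p]) * e * t) := by rw [hU]; ring
    rw [hU1, norm_neg]
    calc ‖(p : ℤ_[p]) * e * t‖ = ‖(p : ℤ_[p])‖ * ‖e‖ * ‖t‖ := by
          rw [norm_mul, norm_mul]
      _ ≤ ‖(p : ℤ_[p])‖ * 1 * 1 := by
          gcongr <;> exact PadicInt.norm_le_one _
      _ = (p : ℝ)⁻¹ := by rw [PadicInt.norm_p]; ring
      _ < 1 := by
          rw [inv_lt_one_iff₀]
          right; exact hp1R
  obtain ⟨z, hz⟩ := cube_of_close_one hp3 hUclose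
  have key : (B₂ : ℤ_[p]) * u₂ ^ 6 = -((B₃ : ℤ_[p]) * u₃ ^ 6) * U := by
    rw [hU]; linear_combination he - ((p : ℤ_[p]) * e) * ht
  have hu₂0 : (u₂ : ℚ_[p]) ≠ 0 := by
    intro h0
    have : ‖u₂‖ = 0 := by rw [PadicInt.norm_def, h0, norm_zero]
    rw [hu₂] at this; norm_num at this
  have hB₃0 : (B₃ : ℚ_[p]) ≠ 0 := by
    rw [Int.cast_ne_zero]
    rintro rfl
    exact h3 (dvd_zero _)
  have keyQ : (B₂ : ℚ_[p]) * (u₂ : ℚ_[p]) ^ 6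
      = -((B₃ : ℚ_[p]) * (u₃ : ℚ_[p]) ^ 6) * (U : ℚ_[p]) := by
    exact_mod_cast congrArg (fun x : ℤ_[p] => (x : ℚ_[p])) key
  have hzQ : (z : ℚ_[p]) ^ 3 = (U : ℚ_[p]) := by
    exact_mod_cast congrArg (fun x : ℤ_[p] => (x : ℚ_[p])) hz
  refine ⟨-((u₃ : ℚ_[p]) ^ 2 / (u₂ : ℚ_[p]) ^ 2) * (z : ℚ_[p]), ?_⟩
  have expand : (-((u₃ : ℚ_[p]) ^ 2 / (u₂ : ℚ_[p]) ^ 2) * (z : ℚ_[p])) ^ 3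
      = -((u₃ : ℚ_[p]) ^ 6 / (u₂ : ℚ_[p]) ^ 6) * (U : ℚ_[p]) := by
    rw [mul_pow, ← hzQ]; field_simp
  rw [expand, eq_div_iff hB₃0]
  field_simp
  linear_combination -keyQ

end Stmt16Aux

open Stmt16Aux in
set_option maxHeartbeats 1000000 in
/-- Let `p ≡ 1 (mod 3)` be a prime, `A₁, A₂, A₃` nonzero integers with `p ∤ A₁`,
`p ∥ A₂`, `p ∥ A₃`, and `A₂/A₃` not a cube in `ℚ_p`, and let `a ∈ ℚ_p` with
`a² = A₁`. Then there is no primitive solution `w, x₁, x₂, x₃ ∈ ℤ_p` of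
`w² = A₁x₁⁶ + A₂x₂⁶ + A₃x₃⁶` with `w² ≠ A₁x₁⁶` and
`v_p(w − a·x₁³) ≡ v_p(w + a·x₁³) (mod 3)`. -/
theorem stmt_16 (p : ℕ) [Fact p.Prime] (hp3 : p % 3 = 1)
    (A₁ A₂ A₃ : ℤ) (h1 : A₁ ≠ 0) (h2 : A₂ ≠ 0) (h3 : A₃ ≠ 0)
    (hA1 : ¬ (p : ℤ) ∣ A₁)
    (hA2 : (p : ℤ) ∣ A₂ ∧ ¬ (p : ℤ) ^ 2 ∣ A₂)
    (hA3 : (p : ℤ) ∣ A₃ ∧ ¬ (p : ℤ) ^ 2 ∣ A₃)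
    (hnc : ¬ ∃ y : ℚ_[p], y ^ 3 = ((A₂ : ℚ_[p]) / (A₃ : ℚ_[p])))
    (a : ℚ_[p]) (ha : a ^ 2 = (A₁ : ℚ_[p])) :
    ¬ ∃ w x₁ x₂ x₃ : ℤ_[p],
        (¬ ((p : ℤ_[p]) ∣ x₁ ∧ (p : ℤ_[p]) ∣ x₂ ∧ (p : ℤ_[p]) ∣ x₃)) ∧
        w ^ 2 = (A₁ : ℤ_[p]) * x₁ ^ 6 + (A₂ : ℤ_[p]) * x₂ ^ 6 + (A₃ : ℤ_[p]) * x₃ ^ 6 ∧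
        w ^ 2 ≠ (A₁ : ℤ_[p]) * x₁ ^ 6 ∧
        ((w : ℚ_[p]) - a * (x₁ : ℚ_[p]) ^ 3).valuation % 3
          = ((w : ℚ_[p]) + a * (x₁ : ℚ_[p]) ^ 3).valuation % 3 := by
  rintro ⟨w, x₁, x₂, x₃, hprim, heq, hne, hval⟩
  have pp : p.Prime := Fact.out
  have hpQ : (p : ℚ_[p]) ≠ 0 := by exact_mod_cast pp.ne_zero
  have hpZ : (p : ℤ_[p]) ≠ 0 := by exact_mod_cast pp.ne_zero
  have hp2 : p ≠ 2 := by omega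
  have hpd2 : ¬ (p : ℤ) ∣ 2 := by
    intro hd
    have hd' : p ∣ 2 := by exact_mod_cast hd
    have := (Nat.prime_dvd_prime_iff_eq pp (by norm_num)).mp hd'
    omega
  -- decompose A₂, A₃
  obtain ⟨⟨B₂, hB2⟩, hA2s⟩ := hA2
  obtain ⟨⟨B₃, hB3⟩, hA3s⟩ := hA3
  have hB2nd : ¬ (p : ℤ) ∣ B₂ := by
    rintro ⟨c, hc⟩
    exact hA2s ⟨c, by rw [hB2, hc]; ring⟩
  have hB3nd : ¬ (p : ℤ) ∣ B₃ := by
    rintro ⟨c, hc⟩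
    exact hA3s ⟨c, by rw [hB3, hc]; ring⟩
  have hBZ2 : ((B₂ : ℤ) : ℤ_[p]) ≠ 0 := by
    rw [Int.cast_ne_zero]; rintro rfl; exact hB2nd (dvd_zero _)
  have hBZ3 : ((B₃ : ℤ) : ℤ_[p]) ≠ 0 := by
    rw [Int.cast_ne_zero]; rintro rfl; exact hB3nd (dvd_zero _)
  have hA1Z : ((A₁ : ℤ) : ℤ_[p]) ≠ 0 := by rw [Int.cast_ne_zero]; exact h1
  -- a is a unit
  have hnA1 : ‖((A₁ : ℤ) : ℚ_[p])‖ = 1 :=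
    le_antisymm (Padic.norm_int_le_one _)
      (le_of_not_gt fun hlt => hA1 (Padic.norm_intCast_lt_one_iff.mp hlt))
  have hna : ‖a‖ = 1 := by
    have hsq : ‖a‖ ^ 2 = 1 := by rw [← norm_pow, ha, hnA1]
    have h0 : (0 : ℝ) ≤ ‖a‖ := norm_nonneg _
    nlinarith
  set aZ : ℤ_[p] := ⟨a, hna.le⟩ with haZdef
  have haZ : (aZ : ℚ_[p]) = a := rfl
  have haZ2 : aZ ^ 2 = ((A₁ : ℤ) : ℤ_[p]) := by
    apply Subtype.ext
    push_cast [haZ]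
    exact ha
  -- N and M
  set N : ℤ_[p] := (A₂ : ℤ_[p]) * x₂ ^ 6 + (A₃ : ℤ_[p]) * x₃ ^ 6 with hNdef
  set M : ℤ_[p] := (B₂ : ℤ_[p]) * x₂ ^ 6 + (B₃ : ℤ_[p]) * x₃ ^ 6 with hMdef
  have heq' : w ^ 2 = (A₁ : ℤ_[p]) * x₁ ^ 6 + N := by
    rw [hNdef]; linear_combination heq
  have hN0 : N ≠ 0 := by
    intro h
    exact hne (by rw [heq', h, add_zero])
  have hNM : N = (p : ℤ_[p]) * M := by
    rw [hNdef, hMdef, hB2, hB3]; push_cast; ring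
  have hM0 : M ≠ 0 := by
    intro h
    rw [h, mul_zero] at hNM
    exact hN0 hNM
  -- reduce to producing units u₂ u₃ with p ∣ B₂u₂⁶ + B₃u₃⁶
  have reduce : ∀ u₂ u₃ : ℤ_[p], ‖u₂‖ = 1 → ‖u₃‖ = 1 →
      (p : ℤ_[p]) ∣ ((B₂ : ℤ_[p]) * u₂ ^ 6 + (B₃ : ℤ_[p]) * u₃ ^ 6) → False := by
    intro u₂ u₃ hu₂ hu₃ hdvd
    obtain ⟨y, hy⟩ := ratio_cube hp3 hB2nd hB3nd hu₂ hu₃ hdvd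
    apply hnc
    refine ⟨y, ?_⟩
    rw [hy, hB2, hB3]
    push_cast
    rw [mul_div_mul_left _ _ hpQ]
  -- valuation of N
  have hvN1 : 1 ≤ N.valuation := (pdvd_iff_val hN0).mp ⟨M, hNM⟩
  have hvNM : N.valuation = 1 + M.valuation := by
    rw [hNM, valZ_mul hpZ hM0]
    congr 1
    exact PadicInt.valuation_p
  have hvM0 : 0 ≤ M.valuation := Nat.zero_le _
  by_cases hx₁ : (p : ℤ_[p]) ∣ x₁
  · -- Case B : p ∣ x₁
    have hvNne1 : N.valuation ≠ 1 := by
      intro hv1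
      by_cases hx10 : x₁ = 0
      · have hNw : N = w ^ 2 := by rw [heq', hx10]; ring
        have hw0 : w ≠ 0 := by
          rintro rfl
          exact hN0 (by rw [hNw]; ring)
        have hvv : N.valuation = 2 * w.valuation := by
          rw [hNw, valZ_pow w hw0 2]
        have := Nat.zero_le w.valuation
        omega
      by_cases hw0 : w = 0
      · have hNT : N = -((A₁ : ℤ_[p]) * x₁ ^ 6) := by
          have : (0 : ℤ_[p]) = (A₁ : ℤ_[p]) * x₁ ^ 6 + N := by
            rw [← heq', hw0]; ring
          linear_combination -this
        have hvv : N.valuation = 6 * x₁.valuation := by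
          rw [hNT, valZ_neg, valZ_mul hA1Z (pow_ne_zero 6 hx10), valZ_intCast hA1,
            valZ_pow x₁ hx10 6]
          norm_num
        have hvx₁ : 1 ≤ x₁.valuation := (pdvd_iff_val hx10).mp hx₁
        omega
      · have hT0 : (A₁ : ℤ_[p]) * x₁ ^ 6 ≠ 0 := mul_ne_zero hA1Z (pow_ne_zero 6 hx10)
        have hvT : ((A₁ : ℤ_[p]) * x₁ ^ 6).valuation = 6 * x₁.valuation := by
          rw [valZ_mul hA1Z (pow_ne_zero 6 hx10), valZ_intCast hA1, valZ_pow x₁ hx10 6]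
          norm_num
        have hvx₁ : 1 ≤ x₁.valuation := (pdvd_iff_val hx10).mp hx₁
        have hvw2 : (w ^ 2).valuation = 2 * w.valuation := by
          rw [valZ_pow w hw0 2]
        have hNeq : N = w ^ 2 + -((A₁ : ℤ_[p]) * x₁ ^ 6) := by
          rw [heq']; ring
        have hmin1 : min (w ^ 2).valuation (-((A₁ : ℤ_[p]) * x₁ ^ 6)).valuation
            ≤ N.valuation := by
          rw [hNeq]
          exact valZ_add_min (by rw [← hNeq]; exact hN0)
        rw [valZ_neg] at hmin1
        have hw20 : w ^ 2 ≠ 0 := pow_ne_zero 2 hw0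
        have hmin2 : min ((A₁ : ℤ_[p]) * x₁ ^ 6).valuation N.valuation
            ≤ (w ^ 2).valuation := by
          rw [heq']
          exact valZ_add_min (by rw [← heq']; exact hw20)
        have := Nat.zero_le w.valuation
        omega
    have hpM : (p : ℤ_[p]) ∣ M := (pdvd_iff_val hM0).mpr (by omega)
    have h23 : ¬ (p : ℤ_[p]) ∣ x₂ ∨ ¬ (p : ℤ_[p]) ∣ x₃ := by
      by_contra hcon
      push_neg at hcon
      exact hprim ⟨hx₁, hcon.1, hcon.2⟩
    have hBd2 : ¬ (p : ℤ_[p]) ∣ ((B₂ : ℤ) : ℤ_[p]) := by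
      rw [← PadicInt.norm_lt_one_iff_dvd, norm_int_eq_one hB2nd]
      norm_num
    have hBd3 : ¬ (p : ℤ_[p]) ∣ ((B₃ : ℤ) : ℤ_[p]) := by
      rw [← PadicInt.norm_lt_one_iff_dvd, norm_int_eq_one hB3nd]
      norm_num
    have hiff : ((p : ℤ_[p]) ∣ x₂ ↔ (p : ℤ_[p]) ∣ x₃) := by
      constructor
      · intro hd
        have h6 : (p : ℤ_[p]) ∣ (B₃ : ℤ_[p]) * x₃ ^ 6 := by
          have he6 : (B₃ : ℤ_[p]) * x₃ ^ 6 = M - (B₂ : ℤ_[p]) * x₂ ^ 6 := by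
            rw [hMdef]; ring
          rw [he6]
          exact dvd_sub hpM (Dvd.dvd.mul_left (hd.pow (by norm_num)) _)
        rcases (PadicInt.prime_p.dvd_mul).mp h6 with h | h
        · exact absurd h hBd3
        · exact PadicInt.prime_p.dvd_of_dvd_pow h
      · intro hd
        have h6 : (p : ℤ_[p]) ∣ (B₂ : ℤ_[p]) * x₂ ^ 6 := by
          have he6 : (B₂ : ℤ_[p]) * x₂ ^ 6 = M - (B₃ : ℤ_[p]) * x₃ ^ 6 := by
            rw [hMdef]; ring
          rw [he6]
          exact dvd_sub hpM (Dvd.dvd.mul_left (hd.pow (by norm_num)) _)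
        rcases (PadicInt.prime_p.dvd_mul).mp h6 with h | h
        · exact absurd h hBd2
        · exact PadicInt.prime_p.dvd_of_dvd_pow h
    have hx₂ : ¬ (p : ℤ_[p]) ∣ x₂ := by tauto
    have hx₃ : ¬ (p : ℤ_[p]) ∣ x₃ := by tauto
    have hu₂ : ‖x₂‖ = 1 := le_antisymm (PadicInt.norm_le_one _)
      (le_of_not_gt fun hlt => hx₂ ((PadicInt.norm_lt_one_iff_dvd _).mp hlt))
    have hu₃ : ‖x₃‖ = 1 := le_antisymm (PadicInt.norm_le_one _)
      (le_of_not_gt fun hlt => hx₃ ((PadicInt.norm_lt_one_iff_dvd _).mp hlt))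
    exact reduce x₂ x₃ hu₂ hu₃ (hMdef ▸ hpM)
  · -- Case A : p ∤ x₁
    have hx10 : x₁ ≠ 0 := by rintro rfl; exact hx₁ (dvd_zero _)
    have hvx₁ : x₁.valuation = 0 := by
      have hn1 : ¬ 1 ≤ x₁.valuation := fun h => hx₁ ((pdvd_iff_val hx10).mpr h)
      have := Nat.zero_le x₁.valuation
      omega
    have hT0 : (A₁ : ℤ_[p]) * x₁ ^ 6 ≠ 0 := mul_ne_zero hA1Z (pow_ne_zero _ hx10)
    have hvT : ((A₁ : ℤ_[p]) * x₁ ^ 6).valuation = 0 := by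
      rw [valZ_mul hA1Z (pow_ne_zero _ hx10), valZ_intCast hA1, valZ_pow _ hx10, hvx₁]
    have hw2v : (w ^ 2).valuation = 0 := by
      rw [heq', valZ_add_of_lt hT0 hN0 (by omega)]
      exact hvT
    have hsum0 : (A₁ : ℤ_[p]) * x₁ ^ 6 + N ≠ 0 := by
      intro h
      have hNT : N = -((A₁ : ℤ_[p]) * x₁ ^ 6) := by linear_combination h
      rw [hNT, valZ_neg, hvT] at hvN1
      omega
    have hw0 : w ≠ 0 := by
      rintro rfl
      exact hsum0 (by rw [← heq']; ring)
    have hvw : w.valuation = 0 := by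
      have := valZ_pow w hw0 2
      rw [hw2v] at this
      omega
    -- the two factors
    set α : ℤ_[p] := w - aZ * x₁ ^ 3 with hα
    set β : ℤ_[p] := w + aZ * x₁ ^ 3 with hβ
    have hαβ : α * β = N := by
      rw [hα, hβ, hNdef]
      linear_combination heq - x₁ ^ 6 * haZ2
    have hα0 : α ≠ 0 := fun h => hN0 (by rw [← hαβ, h, zero_mul])
    have hβ0 : β ≠ 0 := fun h => hN0 (by rw [← hαβ, h, mul_zero])
    have hsum : α.valuation + β.valuation = N.valuation := by
      rw [← hαβ, valZ_mul hα0 hβ0]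
    have h2c : ((2 : ℤ) : ℤ_[p]) = 2 := by norm_cast
    have h2w0 : (2 : ℤ_[p]) * w ≠ 0 := by
      apply mul_ne_zero _ hw0
      rw [← h2c, Int.cast_ne_zero]
      norm_num
    have hv2w : ((2 : ℤ_[p]) * w).valuation = 0 := by
      rw [valZ_mul (by rw [← h2c, Int.cast_ne_zero]; norm_num) hw0, hvw, ← h2c,
        valZ_intCast hpd2]
    have h2w : α + β = 2 * w := by rw [hα, hβ]; ring
    have hminαβ : min α.valuation β.valuation ≤ 0 := by
      have := valZ_add_min (x := α) (y := β) (by rw [h2w]; exact h2w0)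
      rw [h2w, hv2w] at this
      exact this
    have hαQ : ((α : ℤ_[p]) : ℚ_[p]) = (w : ℚ_[p]) - a * (x₁ : ℚ_[p]) ^ 3 := by
      rw [hα]; push_cast [haZ]; ring
    have hβQ : ((β : ℤ_[p]) : ℚ_[p]) = (w : ℚ_[p]) + a * (x₁ : ℚ_[p]) ^ 3 := by
      rw [hβ]; push_cast [haZ]; ring
    have hval' : α.valuation % 3 = β.valuation % 3 := by
      rw [← hαQ, ← hβQ, PadicInt.valuation_coe, PadicInt.valuation_coe] at hval
      omega
    have hvα0 : 0 ≤ α.valuation := Nat.zero_le _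
    have hvβ0 : 0 ≤ β.valuation := Nat.zero_le _
    have hor : α.valuation ≤ 0 ∨ β.valuation ≤ 0 := min_le_iff.mp hminαβ
    have hvN3 : N.valuation % 3 = 0 := by omega
    have hvM3 : M.valuation % 3 = 2 := by omega
    -- analyse M
    by_cases hx20 : x₂ = 0
    · have hMe : M = (B₃ : ℤ_[p]) * x₃ ^ 6 := by rw [hMdef, hx20]; ring
      have hx30 : x₃ ≠ 0 := by
        rintro rfl
        exact hM0 (by rw [hMe]; ring)
      have hvv : M.valuation = 6 * x₃.valuation := by
        rw [hMe, valZ_mul hBZ3 (pow_ne_zero _ hx30), valZ_intCast hB3nd,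
          valZ_pow _ hx30]
        norm_num
      omega
    by_cases hx30 : x₃ = 0
    · have hMe : M = (B₂ : ℤ_[p]) * x₂ ^ 6 := by rw [hMdef, hx30]; ring
      have hvv : M.valuation = 6 * x₂.valuation := by
        rw [hMe, valZ_mul hBZ2 (pow_ne_zero _ hx20), valZ_intCast hB2nd,
          valZ_pow _ hx20]
        norm_num
      omega
    have hT2 : (B₂ : ℤ_[p]) * x₂ ^ 6 ≠ 0 := mul_ne_zero hBZ2 (pow_ne_zero _ hx20)
    have hT3 : (B₃ : ℤ_[p]) * x₃ ^ 6 ≠ 0 := mul_ne_zero hBZ3 (pow_ne_zero _ hx30)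
    have hvT2 : ((B₂ : ℤ_[p]) * x₂ ^ 6).valuation = 6 * x₂.valuation := by
      rw [valZ_mul hBZ2 (pow_ne_zero _ hx20), valZ_intCast hB2nd, valZ_pow _ hx20]
      norm_num
    have hvT3 : ((B₃ : ℤ_[p]) * x₃ ^ 6).valuation = 6 * x₃.valuation := by
      rw [valZ_mul hBZ3 (pow_ne_zero _ hx30), valZ_intCast hB3nd, valZ_pow _ hx30]
      norm_num
    rcases lt_trichotomy x₂.valuation x₃.valuation with hlt | heqv | hlt
    · have hvv : M.valuation = 6 * x₂.valuation := by
        rw [hMdef, valZ_add_of_lt hT2 hT3 (by omega)]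
        exact hvT2
      omega
    · -- equal valuations : extract units
      set n : ℕ := x₂.valuation with hn
      have hn3 : x₃.valuation = n := by omega
      have hx2e := PadicInt.unitCoeff_spec hx20
      have hx3e := PadicInt.unitCoeff_spec hx30
      rw [hn3] at hx3e
      set u₂ := PadicInt.unitCoeff hx20 with hu2
      set u₃ := PadicInt.unitCoeff hx30 with hu3
      set D : ℤ_[p] := (B₂ : ℤ_[p]) * (u₂ : ℤ_[p]) ^ 6 + (B₃ : ℤ_[p]) * (u₃ : ℤ_[p]) ^ 6
        with hD
      have hMD : M = (p : ℤ_[p]) ^ (6 * n) * D := by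
        rw [hMdef, hD, hx2e, hx3e]
        ring
      have hD0 : D ≠ 0 := by
        intro h
        exact hM0 (by rw [hMD, h, mul_zero])
      have hpn0 : ((p : ℤ_[p])) ^ (6 * n) ≠ 0 := pow_ne_zero _ hpZ
      have hvMD : M.valuation = 6 * (n : ℤ) + D.valuation := by
        rw [hMD, valZ_mul hpn0 hD0, valZ_pow _ hpZ, PadicInt.valuation_p]
        push_cast
        ring
      have hvD0 : 0 ≤ D.valuation := Nat.zero_le _
      have hvD1 : 1 ≤ D.valuation := by omega
      have hpD : (p : ℤ_[p]) ∣ D := (pdvd_iff_val hD0).mpr hvD1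
      exact reduce u₂ u₃ (PadicInt.norm_units u₂) (PadicInt.norm_units u₃) (hD ▸ hpD)
    · have hvv : M.valuation = 6 * x₃.valuation := by
        rw [hMdef, add_comm, valZ_add_of_lt hT3 hT2 (by omega)]
        exact hvT3
      omega
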